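/- Let r be a positive integer, c a nonzero integer, and b a polynomial with integer coefficients satisfying b(−1−n) = (−1)^r · b(n) for all integers n. Define the sequence (u_n) of rational numbers by u_0 = 1, u_1 = b(0), and (n+1)^r · u_{n+1} = b(n) · u_n − c · n^r · u_{n−1} for n ≥ 1. Let p be an odd prime and suppose u_m is p-integral for every nonnegative integer m. Then for every positive integer k and every n ∈ {0, 1, …, p−1}, u_{kp+n} ≡ u_{kp} · u_n (mod p). -/

import Mathlib

/-- A rational number is `p`-integral if `p` does not divide its denominator
(in lowest terms). -/
def pIntegral (p : ℕ) (a : ℚ) : Prop := ¬ (p : ℕ) ∣ a.den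
/-- For `p`-integral rationals `a, b`, `a ≡ b (mod p)` means that `p` divides
the numerator of `a - b` in lowest terms. -/
def ratCongr (p : ℕ) (a b : ℚ) : Prop := (p : ℤ) ∣ (a - b).num

theorem apery_like_mul_congr (r : ℕ) (hr : 0 < r) (c : ℤ) (hc : c ≠ 0)
    (b : Polynomial ℤ) (hb : ∀ n : ℤ, b.eval (-1 - n) = (-1) ^ r * b.eval n)
    (u : ℕ → ℚ) (hu0 : u 0 = 1) (hu1 : u 1 = ((b.eval 0 : ℤ) : ℚ))
    (hrec : ∀ n : ℕ, 1 ≤ n →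
      ((n : ℚ) + 1) ^ r * u (n + 1)
        = ((b.eval (n : ℤ) : ℤ) : ℚ) * u n - (c : ℚ) * (n : ℚ) ^ r * u (n - 1))
    (p : ℕ) (hp : p.Prime) (hodd : p ≠ 2)
    (hint : ∀ m : ℕ, pIntegral p (u m)) :
    ∀ k : ℕ, 0 < k → ∀ n < p, ratCongr p (u (k * p + n)) (u (k * p) * u n) := by
  haveI : Fact p.Prime := ⟨hp⟩
  -- lift u to ℤ_[p]
  let U : ℕ → ℤ_[p] := fun m => ⟨((u m : ℚ) : ℚ_[p]), Padic.norm_rat_le_one (hint m)⟩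
  have hUcoe : ∀ m, ((U m : ℚ_[p])) = ((u m : ℚ) : ℚ_[p]) := fun m => rfl
  -- image in ZMod p
  let v : ℕ → ZMod p := fun m => PadicInt.toZMod (U m)
  have hv0 : v 0 = 1 := by
    have : U 0 = 1 := by
      apply Subtype.ext
      rw [hUcoe, hu0]; push_cast; rfl
    simp [v, this]
  have hb0 : v 1 = ((b.eval 0 : ℤ) : ZMod p) := by
    have : U 1 = ((b.eval 0 : ℤ) : ℤ_[p]) := by
      apply Subtype.ext
      rw [hUcoe, hu1]; push_cast; rfl
    rw [show v 1 = PadicInt.toZMod (U 1) from rfl, this, map_intCast]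
  -- the recurrence in ZMod p
  have hvrec : ∀ m : ℕ, 1 ≤ m →
      ((m : ZMod p) + 1) ^ r * v (m + 1)
        = ((b.eval (m : ℤ) : ℤ) : ZMod p) * v m
          - (c : ZMod p) * (m : ZMod p) ^ r * v (m - 1) := by
    intro m hm
    have hZ : ((m : ℤ_[p]) + 1) ^ r * U (m + 1)
        = ((b.eval (m : ℤ) : ℤ) : ℤ_[p]) * U m
          - (c : ℤ_[p]) * (m : ℤ_[p]) ^ r * U (m - 1) := by
      apply Subtype.ext
      have := congrArg (fun q : ℚ => (q : ℚ_[p])) (hrec m hm)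
      push_cast [hUcoe] at this ⊢
      exact this
    have := congrArg (PadicInt.toZMod (p := p)) hZ
    simpa only [map_mul, map_pow, map_sub, map_add, map_one, map_natCast, map_intCast]
      using this
  -- cast facts
  have hcastb : ∀ (x y : ℤ), (x : ZMod p) = (y : ZMod p) →
      ((b.eval x : ℤ) : ZMod p) = ((b.eval y : ℤ) : ZMod p) := by
    intro x y hxy
    have h1 := Polynomial.eval_intCast_map (Int.castRingHom (ZMod p)) b x
    have h2 := Polynomial.eval_intCast_map (Int.castRingHom (ZMod p)) b y
    simp only [Int.coe_castRingHom, Int.cast_id] at h1 h2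
    rw [← h1, ← h2, hxy]
  intro k hk
  have hkp1 : 1 ≤ k * p := Nat.mul_pos hk hp.pos
  -- key induction
  have main : ∀ n, n < p → v (k * p + n) = v (k * p) * v n := by
    intro n
    induction n using Nat.strong_induction_on with
    | _ n ih =>
      match n with
      | 0 => intro _; simp [hv0]
      | 1 =>
        intro _
        have h1 := hvrec (k * p) hkp1
        have hkp0 : ((k * p : ℕ) : ZMod p) = 0 := by
          rw [ZMod.natCast_eq_zero_iff]; exact dvd_mul_left p k
        rw [hkp0] at h1
        have hbeq : ((b.eval ((k * p : ℕ) : ℤ) : ℤ) : ZMod p)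
            = ((b.eval 0 : ℤ) : ZMod p) := by
          apply hcastb
          push_cast [ZMod.natCast_self]
          ring
        rw [hbeq] at h1
        rw [zero_add, one_pow, one_mul, zero_pow hr.ne', mul_zero, zero_mul,
          sub_zero] at h1
        rw [h1, hb0, mul_comm]
      | (m + 2) =>
        intro hn
        have hm1 : m + 1 < p := by omega
        have hm0 : m < p := by omega
        have ih1 : v (k * p + (m + 1)) = v (k * p) * v (m + 1) :=
          ih (m + 1) (by omega) hm1
        have ih0 : v (k * p + m) = v (k * p) * v m := ih m (by omega) hm0
        have h1 := hvrec (k * p + (m + 1)) (by omega)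
        have h2 := hvrec (m + 1) (by omega)
        have hkp0 : ((k * p : ℕ) : ZMod p) = 0 := by
          rw [ZMod.natCast_eq_zero_iff]; exact dvd_mul_left p k
        have hc1 : ((k * p + (m + 1) : ℕ) : ZMod p) = ((m + 1 : ℕ) : ZMod p) := by
          push_cast [ZMod.natCast_self]; ring
        have hbeq : ((b.eval ((k * p + (m + 1) : ℕ) : ℤ) : ℤ) : ZMod p)
            = ((b.eval ((m + 1 : ℕ) : ℤ) : ℤ) : ZMod p) := by
          apply hcastb
          push_cast [ZMod.natCast_self]; ring
        have hidx1 : k * p + (m + 1) + 1 = k * p + (m + 2) := by omega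
        have hidx2 : k * p + (m + 1) - 1 = k * p + m := by omega
        rw [hidx1, hidx2, hc1, hbeq, ih1, ih0] at h1
        simp only [Nat.add_sub_cancel] at h2
        rw [show m + 1 + 1 = m + 2 by omega] at h2
        have hne : ((m + 1 : ℕ) : ZMod p) + 1 ≠ 0 := by
          have : ((m + 2 : ℕ) : ZMod p) ≠ 0 := by
            rw [Ne, ZMod.natCast_eq_zero_iff]
            intro hdvd
            exact absurd (Nat.le_of_dvd (by omega) hdvd) (by omega)
          push_cast at this ⊢
          convert this using 1; ring
        apply mul_left_cancel₀ (pow_ne_zero r hne)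
        linear_combination h1 - v (k * p) * h2
  -- translate back to ratCongr
  intro n hn
  have hveq : v (k * p + n) = v (k * p) * v n := main n hn
  have hker : PadicInt.toZMod (U (k * p + n) - U (k * p) * U n) = 0 := by
    rw [map_sub, map_mul]
    rw [show PadicInt.toZMod (U (k * p + n)) = v (k * p + n) from rfl,
      show PadicInt.toZMod (U (k * p)) = v (k * p) from rfl,
      show PadicInt.toZMod (U n) = v n from rfl, hveq, sub_self]
  have hdvd : (p : ℤ_[p]) ∣ (U (k * p + n) - U (k * p) * U n) := by
    have hmem : U (k * p + n) - U (k * p) * U n ∈ RingHom.ker (PadicInt.toZMod (p := p)) :=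
      hker
    rw [PadicInt.ker_toZMod, PadicInt.maximalIdeal_eq_span_p,
      Ideal.mem_span_singleton] at hmem
    exact hmem
  have hnorm : ‖(U (k * p + n) - U (k * p) * U n : ℤ_[p])‖ < 1 :=
    (PadicInt.norm_lt_one_iff_dvd _).2 hdvd
  set q : ℚ := u (k * p + n) - u (k * p) * u n with hq
  have hcoeq : ((U (k * p + n) - U (k * p) * U n : ℤ_[p]) : ℚ_[p]) = ((q : ℚ) : ℚ_[p]) := by
    push_cast [hUcoe, hq]
    ring
  have hnormq : ‖((q : ℚ) : ℚ_[p])‖ < 1 := by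
    rw [← hcoeq, PadicInt.padic_norm_e_of_padicInt]
    exact hnorm
  have hnum : ‖((q.num : ℤ) : ℚ_[p])‖ < 1 := by
    have hd : (q.den : ℚ) ≠ 0 := by
      exact_mod_cast q.den_pos.ne'
    have hmul : (q.num : ℚ) = q * (q.den : ℚ) := (div_eq_iff hd).1 (Rat.num_div_den q)
    have hqden : ((q.num : ℤ) : ℚ_[p]) = ((q : ℚ) : ℚ_[p]) * ((q.den : ℤ) : ℚ_[p]) := by
      have := congrArg (fun x : ℚ => (x : ℚ_[p])) hmul
      push_cast at this ⊢
      exact this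
    calc ‖((q.num : ℤ) : ℚ_[p])‖ = ‖((q : ℚ) : ℚ_[p])‖ * ‖((q.den : ℤ) : ℚ_[p])‖ := by
          rw [hqden, norm_mul]
      _ ≤ ‖((q : ℚ) : ℚ_[p])‖ * 1 := by
          gcongr
          exact Padic.norm_int_le_one _
      _ < 1 := by rwa [mul_one]
  exact (Padic.norm_intCast_lt_one_iff (k := q.num)).1 hnum
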